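/- For A, Q, Q_T symmetric matrices with Q, Q_T ⪰ 0 and Z : [0,T] → Sym(k) a nonnegative-definite solution of the Riccati equation Z' + AᵀZ + ZA + Q − Z(BBᵀ − (1/ρ²)σσᵀ)Z = 0 with Z(T) = Q_T, the function v(t,x) = xᵀZ(t)x + ε∫ₜᵀ tr(Z(s)σσᵀ) ds solves the PDE ∂_t v + inf_u { (Ax + Bu)·∂_x v + ‖u‖² + xᵀQx + (ε/2)tr(σσᵀ ∂²_{xx}v) + (ε/(2δ))‖σᵀ∂_x v‖² } = 0 with v(T,x) = xᵀQ_T x, where ρ² = δ/(2ε), and the minimizing control is u*(t,x) = −BᵀZ(t)x. -/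

import Mathlib

open Matrix MeasureTheory

private lemma mulVec_dot_eq {k m : ℕ} (B : Matrix (Fin k) (Fin m) ℝ) (u : Fin m → ℝ)
    (y : Fin k → ℝ) : B.mulVec u ⬝ᵥ y = u ⬝ᵥ Bᵀ.mulVec y := by
  rw [Matrix.dotProduct_mulVec, Matrix.vecMul_transpose]

theorem stmt_15 {k m : ℕ} (ε δ ρ T : ℝ) (hε : 0 < ε) (hδ : 0 < δ)
    (hρ : ρ ^ 2 = δ / (2 * ε))
    (A : Matrix (Fin k) (Fin k) ℝ) (hA : A.IsSymm)
    (B : Matrix (Fin k) (Fin m) ℝ) (σ : Matrix (Fin k) (Fin k) ℝ)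
    (Q QT : Matrix (Fin k) (Fin k) ℝ) (hQ : Q.PosSemidef) (hQT : QT.PosSemidef)
    (Z : ℝ → Matrix (Fin k) (Fin k) ℝ)
    (hZsymm : ∀ t, (Z t).IsSymm) (hZpsd : ∀ t, (Z t).PosSemidef)
    (hric : ∀ (t : ℝ) (i j : Fin k), HasDerivAt (fun s => Z s i j)
      ((-(Aᵀ * Z t + Z t * A + Q -
          Z t * (B * Bᵀ - (1 / ρ ^ 2) • (σ * σᵀ)) * Z t) : Matrix (Fin k) (Fin k) ℝ) i j) t)
    (hZT : Z T = QT)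
    (v : ℝ → (Fin k → ℝ) → ℝ)
    (hv : v = fun t x =>
      x ⬝ᵥ (Z t).mulVec x + ε * ∫ s in t..T, Matrix.trace (Z s * (σ * σᵀ))) :
    let Ham : ℝ → (Fin k → ℝ) → (Fin m → ℝ) → ℝ := fun t x u =>
      (A.mulVec x + B.mulVec u) ⬝ᵥ ((2 : ℝ) • (Z t).mulVec x) + u ⬝ᵥ u +
        x ⬝ᵥ Q.mulVec x + (ε / 2) * Matrix.trace ((σ * σᵀ) * ((2 : ℝ) • Z t)) +
        (ε / (2 * δ)) * (σᵀ.mulVec ((2 : ℝ) • (Z t).mulVec x) ⬝ᵥ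
          σᵀ.mulVec ((2 : ℝ) • (Z t).mulVec x))
    (∀ (t : ℝ) (x : Fin k → ℝ),
      deriv (fun s => v s x) t + sInf (Set.range (Ham t x)) = 0) ∧
    (∀ x : Fin k → ℝ, v T x = x ⬝ᵥ QT.mulVec x) ∧
    (∀ (t : ℝ) (x : Fin k → ℝ),
      IsLeast (Set.range (Ham t x)) (Ham t x (-(Bᵀ.mulVec ((Z t).mulVec x))))) := by
  intro Ham
  -- expansion of the drift term of the Hamiltonian
  have e1 : ∀ (t : ℝ) (x : Fin k → ℝ) (u' : Fin m → ℝ),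
      (A.mulVec x + B.mulVec u') ⬝ᵥ ((2:ℝ) • (Z t).mulVec x)
        = 2 * (A.mulVec x ⬝ᵥ (Z t).mulVec x)
          + 2 * (u' ⬝ᵥ Bᵀ.mulVec ((Z t).mulVec x)) := by
    intro t x u'
    rw [add_dotProduct, dotProduct_smul, dotProduct_smul,
      mulVec_dot_eq B, smul_eq_mul, smul_eq_mul]
  -- the minimizing property
  have hleast : ∀ (t : ℝ) (x : Fin k → ℝ),
      IsLeast (Set.range (Ham t x)) (Ham t x (-(Bᵀ.mulVec ((Z t).mulVec x)))) := by
    intro t x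
    refine ⟨⟨_, rfl⟩, ?_⟩
    rintro y ⟨u, rfl⟩
    set b := Bᵀ.mulVec ((Z t).mulVec x) with hb
    have sq : (u + b) ⬝ᵥ (u + b) = u ⬝ᵥ u + 2*(u ⬝ᵥ b) + b ⬝ᵥ b := by
      simp [add_dotProduct, dotProduct_add, dotProduct_comm b u]; ring
    have key : Ham t x u - Ham t x (-b) = (u + b) ⬝ᵥ (u + b) := by
      simp only [Ham, e1, neg_dotProduct, dotProduct_neg, neg_neg, sq, ← hb]
      ring
    have hnn : (0:ℝ) ≤ (u + b) ⬝ᵥ (u + b) :=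
      Finset.sum_nonneg fun i _ => mul_self_nonneg _
    linarith
  refine ⟨?_, ?_, hleast⟩
  · -- the PDE
    intro t x
    have hZcont : ∀ i j, Continuous fun s => Z s i j := fun i j =>
      continuous_iff_continuousAt.mpr fun s => (hric s i j).continuousAt
    have hfcont : Continuous fun s => Matrix.trace (Z s * (σ * σᵀ)) := by
      simp only [Matrix.trace, Matrix.diag, Matrix.mul_apply]
      exact continuous_finset_sum _ fun i _ =>
        continuous_finset_sum _ fun j _ => (hZcont i j).mul continuous_const
    set Z' : Matrix (Fin k) (Fin k) ℝ :=
      (-(Aᵀ * Z t + Z t * A + Q -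
          Z t * (B * Bᵀ - (1 / ρ ^ 2) • (σ * σᵀ)) * Z t)) with hZ'
    have h1 : HasDerivAt (fun s => x ⬝ᵥ (Z s).mulVec x) (x ⬝ᵥ Z'.mulVec x) t := by
      have fe : ∀ M : Matrix (Fin k) (Fin k) ℝ, x ⬝ᵥ M.mulVec x
          = ∑ i : Fin k, ∑ j : Fin k, x i * (M i j * x j) := by
        intro M; simp [dotProduct, Matrix.mulVec, Finset.mul_sum]
      simp only [fe]
      exact HasDerivAt.fun_sum fun i _ => HasDerivAt.fun_sum fun j _ =>
        ((hric t i j).mul_const (x j)).const_mul (x i)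
    have h2 : HasDerivAt (fun s => ∫ r in s..T, Matrix.trace (Z r * (σ * σᵀ)))
        (-(Matrix.trace (Z t * (σ * σᵀ)))) t := by
      have h3 := (hfcont.integral_hasStrictDerivAt T t).hasDerivAt
      have hfl : (fun s => ∫ r in s..T, Matrix.trace (Z r * (σ * σᵀ)))
          = fun s => -∫ r in T..s, Matrix.trace (Z r * (σ * σᵀ)) := by
        funext s; rw [intervalIntegral.integral_symm]
      rw [hfl]; exact h3.neg
    have hd : HasDerivAt (fun s => x ⬝ᵥ (Z s).mulVec x
          + ε * ∫ r in s..T, Matrix.trace (Z r * (σ * σᵀ)))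
        (x ⬝ᵥ Z'.mulVec x + ε * -(Matrix.trace (Z t * (σ * σᵀ)))) t :=
      h1.add (h2.const_mul ε)
    have hde : deriv (fun s => v s x) t
        = x ⬝ᵥ Z'.mulVec x + ε * -(Matrix.trace (Z t * (σ * σᵀ))) := by
      simp only [hv]; exact hd.deriv
    rw [hde, (hleast t x).csInf_eq]
    -- now pure algebra
    set w := (Z t).mulVec x with hw
    set b := Bᵀ.mulVec w with hb
    have symmdot : ∀ y : Fin k → ℝ, x ⬝ᵥ (Z t).mulVec y = w ⬝ᵥ y := by
      intro y
      have h := mulVec_dot_eq (Z t) x y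
      rw [(hZsymm t).eq] at h
      exact h.symm
    have ha : x ⬝ᵥ (Aᵀ * Z t).mulVec x = A.mulVec x ⬝ᵥ w := by
      rw [← Matrix.mulVec_mulVec]; exact (mulVec_dot_eq A x w).symm
    have hb2 : x ⬝ᵥ (Z t * A).mulVec x = A.mulVec x ⬝ᵥ w := by
      rw [← Matrix.mulVec_mulVec, symmdot, dotProduct_comm]
    have hc2 : x ⬝ᵥ (Z t * (B * Bᵀ) * Z t).mulVec x = b ⬝ᵥ b := by
      rw [← Matrix.mulVec_mulVec, ← Matrix.mulVec_mulVec, ← Matrix.mulVec_mulVec,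
        symmdot, dotProduct_comm, mulVec_dot_eq, ← hw, ← hb]
    have hd2 : x ⬝ᵥ (Z t * (σ * σᵀ) * Z t).mulVec x
        = σᵀ.mulVec w ⬝ᵥ σᵀ.mulVec w := by
      rw [← Matrix.mulVec_mulVec, ← Matrix.mulVec_mulVec, ← Matrix.mulVec_mulVec,
        symmdot, dotProduct_comm, mulVec_dot_eq, ← hw]
    have hM3 : Z t * (B * Bᵀ - (1 / ρ ^ 2) • (σ * σᵀ)) * Z t
        = Z t * (B * Bᵀ) * Z t - (1 / ρ ^ 2) • (Z t * (σ * σᵀ) * Z t) := by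
      rw [Matrix.mul_sub, mul_smul_comm, Matrix.sub_mul, smul_mul_assoc]
    have f1 : x ⬝ᵥ Z'.mulVec x
        = -(2 * (A.mulVec x ⬝ᵥ w) + x ⬝ᵥ Q.mulVec x
            - (b ⬝ᵥ b - (1 / ρ ^ 2) * (σᵀ.mulVec w ⬝ᵥ σᵀ.mulVec w))) := by
      rw [hZ', hM3]
      simp only [Matrix.neg_mulVec, dotProduct_neg, Matrix.add_mulVec,
        Matrix.sub_mulVec, dotProduct_add, dotProduct_sub,
        Matrix.smul_mulVec, dotProduct_smul, smul_eq_mul,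
        ha, hb2, hc2, hd2]
      ring
    have ftr : Matrix.trace ((σ * σᵀ) * ((2:ℝ) • Z t))
        = 2 * Matrix.trace (Z t * (σ * σᵀ)) := by
      rw [mul_smul_comm, Matrix.trace_smul, smul_eq_mul, Matrix.trace_mul_comm]
    have fσ : σᵀ.mulVec ((2:ℝ) • w) ⬝ᵥ σᵀ.mulVec ((2:ℝ) • w)
        = 4 * (σᵀ.mulVec w ⬝ᵥ σᵀ.mulVec w) := by
      rw [Matrix.mulVec_smul, smul_dotProduct, dotProduct_smul,
        smul_eq_mul, smul_eq_mul]
      ring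
    have hham : Ham t x (-b)
        = 2 * (A.mulVec x ⬝ᵥ w) - b ⬝ᵥ b + x ⬝ᵥ Q.mulVec x
          + ε * Matrix.trace (Z t * (σ * σᵀ))
          + (2 * ε / δ) * (σᵀ.mulVec w ⬝ᵥ σᵀ.mulVec w) := by
      simp only [Ham, e1, ← hw, ← hb, ftr, fσ, neg_dotProduct,
        dotProduct_neg, neg_neg]
      field_simp
      ring
    have hrq : 1 / ρ ^ 2 = 2 * ε / δ := by
      rw [hρ]; field_simp
    rw [f1, hham, hrq]
    ring
  · -- terminal condition
    intro x
    simp [hv, hZT]
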